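/- (Bounding convex hull by coordinate box) Let A be the convex hull of finitely many points x₁,...,xₙ ∈ ℝ^d, and let D = I₁ × I₂ × ··· × I_d be the box whose k-th factor is the interval [min_i x_{i,k}, max_i x_{i,k}]. Then A ⊆ D and the Hausdorff distance satisfies D_H(A, D) ≤ √(d/2) · μ(A), where μ(A) = max_{a,b∈A} ‖a-b‖₂ is the diameter of A. -/

import Mathlib

open Metric

set_option maxHeartbeats 1000000 in
theorem convexHull_box_hausdorff_bound
    (d n : ℕ) (hn : 0 < n)
    (hne : (Finset.univ : Finset (Fin n)).Nonempty)
    (x : Fin n → EuclideanSpace ℝ (Fin d))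
    (A D : Set (EuclideanSpace ℝ (Fin d)))
    (hA : A = convexHull ℝ (Set.range x))
    (hD : D = {y | ∀ k : Fin d,
        y k ∈ Set.Icc (Finset.univ.inf' hne (fun i : Fin n => x i k))
                      (Finset.univ.sup' hne (fun i : Fin n => x i k))}) :
    A ⊆ D ∧ hausdorffDist A D ≤ Real.sqrt ((d : ℝ) / 2) * diam A := by
  have hxA : ∀ i, x i ∈ A := fun i => hA ▸ subset_convexHull ℝ _ ⟨i, rfl⟩
  -- D is convex
  have hDconv : Convex ℝ D := by
    rw [hD]
    intro p hp q hq a b ha hb hab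
    intro k
    have hp' := hp k; have hq' := hq k
    simp only [Set.mem_Icc] at hp' hq' ⊢
    have hcoord : (a • p + b • q) k = a * p k + b * q k := by
      simp [PiLp.add_apply, PiLp.smul_apply]
    rw [hcoord]
    have hL : a * (Finset.univ.inf' hne fun i => x i k) + b * (Finset.univ.inf' hne fun i => x i k)
        = Finset.univ.inf' hne fun i => x i k := by rw [← add_mul, hab, one_mul]
    have hU : a * (Finset.univ.sup' hne fun i => x i k) + b * (Finset.univ.sup' hne fun i => x i k)
        = Finset.univ.sup' hne fun i => x i k := by rw [← add_mul, hab, one_mul]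
    constructor
    · have h1 := mul_le_mul_of_nonneg_left hp'.1 ha
      have h2 := mul_le_mul_of_nonneg_left hq'.1 hb
      linarith
    · have h1 := mul_le_mul_of_nonneg_left hp'.2 ha
      have h2 := mul_le_mul_of_nonneg_left hq'.2 hb
      linarith
  -- the bounding box contains the points
  have hxD : Set.range x ⊆ D := by
    rintro _ ⟨i, rfl⟩
    rw [hD]
    intro k
    exact Set.mem_Icc.mpr ⟨Finset.inf'_le _ (Finset.mem_univ i),
      Finset.le_sup' (fun j : Fin n => x j k) (Finset.mem_univ i)⟩
  have hsub : A ⊆ D := hA ▸ convexHull_min hxD hDconv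
  refine ⟨hsub, ?_⟩
  have hμ0 : (0:ℝ) ≤ diam A := diam_nonneg
  have hr0 : (0:ℝ) ≤ Real.sqrt ((d : ℝ) / 2) * diam A := by positivity
  have hAcompact : IsCompact A := hA ▸ (Set.finite_range x).isCompact_convexHull (𝕜 := ℝ)
  have hAconv : Convex ℝ A := hA ▸ convex_convexHull ℝ _
  have hAne : A.Nonempty := ⟨x ⟨0, hn⟩, hxA _⟩
  -- key: every point of D is close to A
  have key : ∀ y ∈ D, ∃ a ∈ A, dist y a ≤ Real.sqrt ((d : ℝ) / 2) * diam A := by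
    intro y hy
    rw [hD] at hy
    have hy' : ∀ k : Fin d,
        Finset.univ.inf' hne (fun i : Fin n => x i k) ≤ y k ∧
        y k ≤ Finset.univ.sup' hne (fun i : Fin n => x i k) := fun k => hy k
    obtain ⟨a, haA, hproj⟩ := exists_norm_eq_iInf_of_complete_convex hAne
      hAcompact.isComplete hAconv y
    rw [norm_eq_iInf_iff_real_inner_le_zero hAconv haA] at hproj
    refine ⟨a, haA, ?_⟩
    set v : EuclideanSpace ℝ (Fin d) := y - a with hv
    rw [dist_eq_norm, ← hv]
    by_cases hv0 : v = 0
    · rw [hv0, norm_zero]; exact hr0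
    have hnormsq : ‖v‖^2 = ∑ k, v k ^2 := by
      rw [EuclideanSpace.norm_eq, Real.sq_sqrt (by positivity)]
      simp [sq_abs]
    -- key1 : for every j, ‖v‖² ≤ ∑ k, v k * (y k - x j k)
    have key1 : ∀ j : Fin n, ‖v‖^2 ≤ ∑ k, v k * (y k - x j k) := by
      intro j
      have h0 : (inner ℝ v (x j - a) : ℝ) ≤ 0 := hproj (x j) (hxA j)
      have h1 : (inner ℝ v (y - x j) : ℝ) = ‖v‖^2 - inner ℝ v (x j - a) := by
        have hyx : y - x j = v - (x j - a) := by rw [hv]; abel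
        rw [hyx, inner_sub_right, hv, real_inner_self_eq_norm_sq]
      have h2 : (inner ℝ v (y - x j) : ℝ) = ∑ k, v k * (y k - x j k) := by
        simp [PiLp.inner_apply, RCLike.inner_apply, mul_comm, PiLp.sub_apply]
      nlinarith [h0, h1, h2]
    -- choice of extreme points per coordinate
    have hmax : ∀ k : Fin d, ∃ i : Fin n,
        Finset.univ.sup' hne (fun i : Fin n => x i k) = x i k := by
      intro k
      obtain ⟨i, _, h⟩ := Finset.exists_mem_eq_sup' hne (fun i : Fin n => x i k)
      exact ⟨i, h⟩
    have hmin : ∀ k : Fin d, ∃ i : Fin n,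
        Finset.univ.inf' hne (fun i : Fin n => x i k) = x i k := by
      intro k
      obtain ⟨i, _, h⟩ := Finset.exists_mem_eq_inf' hne (fun i : Fin n => x i k)
      exact ⟨i, h⟩
    choose imax himax using hmax
    choose imin himin using hmin
    set I : Fin d → Fin n := fun k => if 0 ≤ v k then imax k else imin k with hI
    -- key2 : v k * y k ≤ v k * x (I k) k
    have key2 : ∀ k : Fin d, v k * y k ≤ v k * x (I k) k := by
      intro k
      by_cases h : 0 ≤ v k
      · have hIk : x (I k) k = Finset.univ.sup' hne (fun i : Fin n => x i k) := by
          rw [hI]; simp [h, ← himax k]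
        rw [hIk]
        exact mul_le_mul_of_nonneg_left (hy' k).2 h
      · have hIk : x (I k) k = Finset.univ.inf' hne (fun i : Fin n => x i k) := by
          rw [hI]; simp [h, ← himin k]
        rw [hIk]
        exact mul_le_mul_of_nonpos_left (hy' k).1 (le_of_not_ge h)
    -- coordinate differences
    set E : Fin d → Fin d → ℝ := fun k m => x (I k) k - x (I m) k with hE
    -- ‖v‖⁴ ≤ S
    have stepC : ‖v‖^4 ≤ ∑ m, ∑ k, v m ^2 * (v k * E k m) := by
      have h1 : ‖v‖^4 = ∑ m, v m ^2 * ‖v‖^2 := by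
        rw [← Finset.sum_mul, ← hnormsq]; ring
      rw [h1]
      refine Finset.sum_le_sum fun m _ => ?_
      have h2 : ‖v‖^2 ≤ ∑ k, v k * E k m := by
        refine le_trans (key1 (I m)) (Finset.sum_le_sum fun k _ => ?_)
        simp only [hE]
        nlinarith [key2 k]
      calc v m ^2 * ‖v‖^2 ≤ v m ^2 * ∑ k, v k * E k m :=
            mul_le_mul_of_nonneg_left h2 (sq_nonneg _)
        _ = ∑ k, v m ^2 * (v k * E k m) := Finset.mul_sum _ _ _
    -- bound on E pairs
    have hEbound : ∀ k m : Fin d, E k m ^2 + E m k ^2 ≤ diam A ^2 := by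
      intro k m
      by_cases hkm : k = m
      · subst hkm
        have hEkk : E k k = 0 := by simp [hE]
        rw [hEkk]
        nlinarith [sq_nonneg (diam A)]
      · set w : EuclideanSpace ℝ (Fin d) := x (I k) - x (I m) with hw
        have h1 : E k m = w k := by simp [hE, hw, PiLp.sub_apply]
        have h2 : E m k = -(w m) := by simp [hE, hw, PiLp.sub_apply]
        have h3 : w k ^2 + w m ^2 ≤ ‖w‖^2 := by
          have hp : w k ^2 + w m ^2 = ∑ j ∈ ({k, m} : Finset (Fin d)), w j ^2 := by
            rw [Finset.sum_pair hkm]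
          have h4 : ‖w‖^2 = ∑ j, w j ^2 := by
            rw [EuclideanSpace.norm_eq, Real.sq_sqrt (by positivity)]
            simp [sq_abs]
          rw [hp, h4]
          exact Finset.sum_le_sum_of_subset_of_nonneg (Finset.subset_univ _)
            (fun j _ _ => sq_nonneg _)
        have h5 : ‖w‖ ≤ diam A := by
          rw [hw, ← dist_eq_norm]
          exact dist_le_diam_of_mem hAcompact.isBounded (hxA _) (hxA _)
        have h6 : ‖w‖^2 ≤ diam A ^2 := by nlinarith [norm_nonneg w]
        rw [h1, h2]
        nlinarith
    -- per-pair Cauchy–Schwarz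
    have stepE : ∀ k m : Fin d,
        v m ^2 * (v k * E k m) + v k ^2 * (v m * E m k)
          ≤ |v k * v m| * Real.sqrt (v k ^2 + v m ^2) * diam A := by
      intro k m
      have hQ : (v m * E k m + v k * E m k)^2 ≤ (v k ^2 + v m ^2) * (diam A)^2 := by
        have cs : (v m * E k m + v k * E m k)^2
            ≤ (v m ^2 + v k ^2) * (E k m ^2 + E m k ^2) := by
          nlinarith [sq_nonneg (v m * E m k - v k * E k m)]
        nlinarith [hEbound k m, sq_nonneg (v k), sq_nonneg (v m),
          add_nonneg (sq_nonneg (E k m)) (sq_nonneg (E m k))]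
      have habs : |v m * E k m + v k * E m k| ≤ Real.sqrt (v k ^2 + v m ^2) * diam A := by
        rw [← Real.sqrt_sq_eq_abs]
        calc Real.sqrt ((v m * E k m + v k * E m k)^2)
            ≤ Real.sqrt ((v k ^2 + v m ^2) * (diam A)^2) := Real.sqrt_le_sqrt hQ
          _ = Real.sqrt (v k ^2 + v m ^2) * diam A := by
              rw [Real.sqrt_mul (by positivity), Real.sqrt_sq hμ0]
      calc v m ^2 * (v k * E k m) + v k ^2 * (v m * E m k)
          = (v k * v m) * (v m * E k m + v k * E m k) := by ring
        _ ≤ |v k * v m| * |v m * E k m + v k * E m k| := by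
            exact le_trans (le_abs_self _) (by rw [abs_mul])
        _ ≤ |v k * v m| * (Real.sqrt (v k ^2 + v m ^2) * diam A) :=
            mul_le_mul_of_nonneg_left habs (abs_nonneg _)
        _ = |v k * v m| * Real.sqrt (v k ^2 + v m ^2) * diam A := by ring
    -- symmetrize: 2 S ≤ (∑ pairs) * diam A
    set T : ℝ := ∑ m, ∑ k, |v k * v m| * Real.sqrt (v k ^2 + v m ^2) with hT
    have stepD : 2 * ‖v‖^4 ≤ T * diam A := by
      have hswap : (∑ m, ∑ k, v k ^2 * (v m * E m k)) = ∑ m, ∑ k, v m ^2 * (v k * E k m) :=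
        Finset.sum_comm
      have h2S : 2 * ‖v‖^4 ≤
          ∑ m, ∑ k, (v m ^2 * (v k * E k m) + v k ^2 * (v m * E m k)) := by
        have hsplit : (∑ m, ∑ k, (v m ^2 * (v k * E k m) + v k ^2 * (v m * E m k)))
            = (∑ m, ∑ k, v m ^2 * (v k * E k m)) + (∑ m, ∑ k, v k ^2 * (v m * E m k)) := by
          simp [Finset.sum_add_distrib]
        rw [hsplit, hswap]
        linarith [stepC]
      refine le_trans h2S ?_
      rw [hT, Finset.sum_mul]
      refine Finset.sum_le_sum fun m _ => ?_
      rw [Finset.sum_mul]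
      exact Finset.sum_le_sum fun k _ => stepE k m
    -- Cauchy–Schwarz over all pairs
    have stepF : T ≤ ‖v‖^3 * Real.sqrt (2 * d) := by
      have hTP : T = ∑ p : Fin d × Fin d, |v p.2 * v p.1| * Real.sqrt (v p.2 ^2 + v p.1 ^2) := by
        rw [hT, Fintype.sum_prod_type]
      have cs := Finset.sum_mul_sq_le_sq_mul_sq Finset.univ
        (fun p : Fin d × Fin d => |v p.2 * v p.1|)
        (fun p : Fin d × Fin d => Real.sqrt (v p.2 ^2 + v p.1 ^2))
      have hsum1 : (∑ p : Fin d × Fin d, |v p.2 * v p.1| ^2) = (‖v‖^2)^2 := by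
        have e1 : (∑ p : Fin d × Fin d, |v p.2 * v p.1| ^2) = ∑ m, ∑ k, v k ^2 * v m ^2 := by
          rw [Fintype.sum_prod_type]
          exact Finset.sum_congr rfl fun m _ => Finset.sum_congr rfl fun k _ => by
            rw [sq_abs, mul_pow]
        rw [e1, Finset.sum_comm, ← Finset.sum_mul_sum, ← hnormsq]
        ring
      have hsum2 : (∑ p : Fin d × Fin d, Real.sqrt (v p.2 ^2 + v p.1 ^2) ^2)
          = 2 * d * ‖v‖^2 := by
        have e1 : (∑ p : Fin d × Fin d, Real.sqrt (v p.2 ^2 + v p.1 ^2) ^2)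
            = ∑ m, ∑ k, (v k ^2 + v m ^2) := by
          rw [Fintype.sum_prod_type]
          exact Finset.sum_congr rfl fun m _ => Finset.sum_congr rfl fun k _ =>
            Real.sq_sqrt (by positivity)
        have e2 : ∀ m : Fin d, (∑ k, (v k ^2 + v m ^2)) = (∑ k, v k ^2) + d * v m ^2 := by
          intro m
          rw [Finset.sum_add_distrib, Finset.sum_const, Finset.card_univ, Fintype.card_fin,
            nsmul_eq_mul]
        rw [e1, Finset.sum_congr rfl fun m _ => e2 m, Finset.sum_add_distrib,
          Finset.sum_const, Finset.card_univ, Fintype.card_fin, nsmul_eq_mul,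
          ← Finset.mul_sum, ← hnormsq]
        ring
      have hLHS : T^2 ≤ (‖v‖^2)^2 * (2 * d * ‖v‖^2) := by
        rw [← hsum1, ← hsum2, hTP]; exact cs
      have hT0 : 0 ≤ T := by
        rw [hT]
        refine Finset.sum_nonneg fun m _ => Finset.sum_nonneg fun k _ => ?_
        positivity
      have hRHS : (‖v‖^2)^2 * (2 * d * ‖v‖^2) = (‖v‖^3 * Real.sqrt (2 * d))^2 := by
        rw [mul_pow, Real.sq_sqrt (by positivity)]
        ring
      rw [hRHS] at hLHS
      have h3 : (0:ℝ) ≤ ‖v‖^3 * Real.sqrt (2 * d) := by positivity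
      nlinarith [hLHS, hT0, h3]
    -- combine everything
    have hfinal : 2 * ‖v‖^4 ≤ ‖v‖^3 * Real.sqrt (2 * d) * diam A :=
      le_trans stepD (mul_le_mul_of_nonneg_right stepF hμ0)
    have hvpos : 0 < ‖v‖ := norm_pos_iff.mpr hv0
    have h2 : ‖v‖ ≤ Real.sqrt (2 * d) / 2 * diam A := by
      have h3 : 2 * ‖v‖^4 = (2 * ‖v‖) * ‖v‖^3 := by ring
      have h4 : ‖v‖^3 * Real.sqrt (2 * d) * diam A
          = (Real.sqrt (2*d) * diam A) * ‖v‖^3 := by ring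
      rw [h3, h4] at hfinal
      have h5 : 2 * ‖v‖ ≤ Real.sqrt (2*d) * diam A :=
        le_of_mul_le_mul_right hfinal (by positivity)
      linarith
    have hsqrt : Real.sqrt (2 * d) / 2 = Real.sqrt ((d:ℝ)/2) := by
      rw [show ((d:ℝ)/2) = (2*(d:ℝ))/4 by ring,
        Real.sqrt_div (by positivity), show Real.sqrt 4 = 2 by
          rw [show (4:ℝ) = 2^2 by norm_num, Real.sqrt_sq (by norm_num)]]
    rw [← hsqrt]
    exact h2
  refine hausdorffDist_le_of_mem_dist hr0 ?_ ?_
  · intro z hz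
    exact ⟨z, hsub hz, by rw [dist_self]; exact hr0⟩
  · intro z hz
    obtain ⟨a, haA, hd⟩ := key z hz
    exact ⟨a, haA, hd⟩
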